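/- Let d ≥ 1, let D ⊂ ℝ^d be a nonempty bounded open set, let σ be a finite Borel measure on ∂D, and let P : D × ∂D → (0,∞) be Borel measurable such that Pσ(x) := ∫_{∂D} P(x,z) dσ(z) ∈ (0,∞) for every x ∈ D. Assume there exist C₁, C₂ > 0 such that (i) P(x,z) ≤ C₁ (δ_D(x)/|x−z|^d) Pσ(x) for all x ∈ D and z ∈ ∂D, and (ii) δ_D(x) ∫_{∂D} |x−z|^{-d} dσ(z) ≤ C₂ for all x ∈ D. Let ζ : ∂D → ℝ be σ-integrable, and let z₀ ∈ ∂D be a point at which ζ restricted to ∂D is continuous. Then lim_{D ∋ x → z₀} Pζ(x)/Pσ(x) = ζ(z₀), where Pζ(x) := ∫_{∂D} P(x,z) ζ(z) dσ(z). Moreover, if ζ is continuous on ∂D, the convergence is uniform in z₀ ∈ ∂D: for every ε > 0 there exists r > 0 such that |Pζ(x)/Pσ(x) − ζ(z₀)| ≤ ε whenever z₀ ∈ ∂D, x ∈ D and |x − z₀| < r. -/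

import Mathlib

open Real MeasureTheory Metric Filter


lemma core_est {d : ℕ}
    {D : Set (EuclideanSpace ℝ (Fin d))} (hD : IsOpen D)
    {σ : Measure (EuclideanSpace ℝ (Fin d))} [IsFiniteMeasure σ]
    {P : EuclideanSpace ℝ (Fin d) → EuclideanSpace ℝ (Fin d) → ℝ}
    (hPmeas : Measurable (Function.uncurry P))
    (hPpos : ∀ x ∈ D, ∀ z ∈ frontier D, 0 < P x z)
    (hPint : ∀ x ∈ D, IntegrableOn (P x) (frontier D) σ)
    (hPσpos : ∀ x ∈ D, 0 < ∫ z in frontier D, P x z ∂σ)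
    {C₁ : ℝ} (hC₁ : 0 < C₁)
    (hker : ∀ x ∈ D, ∀ z ∈ frontier D,
      P x z ≤ C₁ * (infDist x Dᶜ / dist x z ^ d) * ∫ w in frontier D, P x w ∂σ)
    {ζ : EuclideanSpace ℝ (Fin d) → ℝ} (hζint : IntegrableOn ζ (frontier D) σ)
    {w : EuclideanSpace ℝ (Fin d)} (hw : w ∈ frontier D)
    {η ε' : ℝ} (hη : 0 < η) (hε' : 0 ≤ ε')
    (hmod : ∀ z ∈ frontier D, dist z w < η → |ζ z - ζ w| ≤ ε')
    {x : EuclideanSpace ℝ (Fin d)} (hx : x ∈ D) (hxw : dist x w < η / 2) :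
    |(∫ z in frontier D, P x z * ζ z ∂σ) / (∫ z in frontier D, P x z ∂σ) - ζ w|
      ≤ ε' + C₁ * (2 / η) ^ d * (∫ z in frontier D, |ζ z - ζ w| ∂σ) * dist x w := by
  have hAmeas : MeasurableSet (frontier D) := isClosed_frontier.measurableSet
  have hAc : frontier D ⊆ Dᶜ := by
    intro z hz
    exact (hD.frontier_eq ▸ hz).2
  have hδpos : 0 < infDist x Dᶜ := by
    refine (hD.isClosed_compl.notMem_iff_infDist_pos ⟨w, hAc hw⟩).1 ?_
    simpa using hx
  have hδle : ∀ z ∈ frontier D, infDist x Dᶜ ≤ dist x z :=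
    fun z hz => infDist_le_dist_of_mem (hAc hz)
  set δx := infDist x Dᶜ with hδ
  set Pσx := ∫ z in frontier D, P x z ∂σ with hPσ
  set M := ∫ z in frontier D, |ζ z - ζ w| ∂σ with hM
  have hPσx : 0 < Pσx := hPσpos x hx
  have hM0 : 0 ≤ M := integral_nonneg fun z => abs_nonneg _
  have hδw : δx ≤ dist x w := infDist_le_dist_of_mem (hAc hw)
  -- uniform bound for P x
  set K := C₁ * (δx / δx ^ d) * Pσx with hK
  have hKb : ∀ z ∈ frontier D, P x z ≤ K := by
    intro z hz
    refine (hker x hx z hz).trans ?_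
    rw [hK]
    gcongr
    exact hδle z hz
  -- measurability
  have hPxm : AEStronglyMeasurable (P x) (σ.restrict (frontier D)) :=
    (hPmeas.comp measurable_prodMk_left).aestronglyMeasurable
  have hζm : AEStronglyMeasurable (fun z => ζ z - ζ w) (σ.restrict (frontier D)) :=
    hζint.aestronglyMeasurable.sub aestronglyMeasurable_const
  -- integrabilities
  have hζsub : IntegrableOn (fun z => ζ z - ζ w) (frontier D) σ :=
    hζint.sub (integrableOn_const (measure_lt_top σ _).ne)
  have habs : IntegrableOn (fun z => |ζ z - ζ w|) (frontier D) σ := hζsub.abs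
  have hI3 : IntegrableOn (fun z => P x z * (ζ z - ζ w)) (frontier D) σ := by
    refine Integrable.mono' (habs.const_mul K) (hPxm.mul hζm) ?_
    filter_upwards [ae_restrict_mem hAmeas] with z hz
    rw [Real.norm_eq_abs, abs_mul, abs_of_pos (hPpos x hx z hz)]
    exact mul_le_mul_of_nonneg_right (hKb z hz) (abs_nonneg _)
  have hI1 : IntegrableOn (fun z => P x z * ζ z) (frontier D) σ := by
    have h := hI3.add ((hPint x hx).mul_const (ζ w))
    refine IntegrableOn.congr_fun h ?_ hAmeas
    intro z _
    simp only [Pi.add_apply]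
    ring
  have hI2 : IntegrableOn (fun z => P x z * |ζ z - ζ w|) (frontier D) σ := by
    refine IntegrableOn.congr_fun hI3.abs ?_ hAmeas
    intro z hz
    simp only
    rw [abs_mul, abs_of_pos (hPpos x hx z hz)]
  -- pointwise estimate
  set c := C₁ * (2 / η) ^ d * Pσx * δx with hc
  have hc0 : 0 ≤ c := by
    rw [hc]
    exact mul_nonneg (mul_nonneg (mul_nonneg hC₁.le (by positivity)) hPσx.le) hδpos.le
  have hb : ∀ z ∈ frontier D, P x z * |ζ z - ζ w| ≤ ε' * P x z + c * |ζ z - ζ w| := by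
    intro z hz
    by_cases hzw : dist z w < η
    · have h1 : P x z * |ζ z - ζ w| ≤ ε' * P x z := by
        rw [mul_comm (ε' : ℝ)]
        exact mul_le_mul_of_nonneg_left (hmod z hz hzw) (hPpos x hx z hz).le
      exact h1.trans (le_add_of_nonneg_right (mul_nonneg hc0 (abs_nonneg _)))
    · push_neg at hzw
      have hd2 : η / 2 ≤ dist x z := by
        have := dist_triangle z x w
        rw [dist_comm x z]
        linarith [dist_comm x w ▸ this]
      have hpos2 : (0:ℝ) < η / 2 := by linarith
      have h2 : δx / dist x z ^ d ≤ (2 / η) ^ d * δx := by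
        have h5 : δx / dist x z ^ d ≤ δx / (η / 2) ^ d := by
          gcongr
        refine h5.trans_eq ?_
        rw [div_eq_mul_inv, ← inv_pow, inv_div, mul_comm]
      have h3 : P x z ≤ c := by
        refine (hker x hx z hz).trans ?_
        rw [hc]
        calc C₁ * (δx / dist x z ^ d) * Pσx ≤ C₁ * ((2 / η) ^ d * δx) * Pσx := by
              gcongr
          _ = C₁ * (2 / η) ^ d * Pσx * δx := by ring
      have h4 : P x z * |ζ z - ζ w| ≤ c * |ζ z - ζ w| :=
        mul_le_mul_of_nonneg_right h3 (abs_nonneg _)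
      exact h4.trans (le_add_of_nonneg_left (mul_nonneg hε' (hPpos x hx z hz).le))
  -- integral estimate
  have hint : ∫ z in frontier D, P x z * |ζ z - ζ w| ∂σ ≤ ε' * Pσx + c * M := by
    have h1 : IntegrableOn (fun z => ε' * P x z) (frontier D) σ := (hPint x hx).const_mul ε'
    have h2 : IntegrableOn (fun z => c * |ζ z - ζ w|) (frontier D) σ := habs.const_mul c
    calc ∫ z in frontier D, P x z * |ζ z - ζ w| ∂σ
        ≤ ∫ z in frontier D, (ε' * P x z + c * |ζ z - ζ w|) ∂σ :=
          setIntegral_mono_on hI2 (h1.add h2) hAmeas hb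
      _ = (∫ z in frontier D, ε' * P x z ∂σ) + ∫ z in frontier D, c * |ζ z - ζ w| ∂σ :=
          integral_add h1 h2
      _ = ε' * Pσx + c * M := by rw [integral_const_mul, integral_const_mul]
  have keq : (∫ z in frontier D, P x z * (ζ z - ζ w) ∂σ)
      = (∫ z in frontier D, P x z * ζ z ∂σ) - Pσx * ζ w := by
    have : (fun z => P x z * (ζ z - ζ w))
        = fun z => P x z * ζ z - P x z * ζ w := by funext z; ring
    rw [this, integral_sub hI1 ((hPint x hx).mul_const _), integral_mul_const]
  have kabs : |∫ z in frontier D, P x z * (ζ z - ζ w) ∂σ|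
      ≤ ∫ z in frontier D, P x z * |ζ z - ζ w| ∂σ := by
    have h6 := norm_integral_le_integral_norm (μ := σ.restrict (frontier D))
      (fun z => P x z * (ζ z - ζ w))
    simp only [Real.norm_eq_abs] at h6
    refine h6.trans_eq ?_
    refine setIntegral_congr_fun hAmeas ?_
    intro z hz
    simp only
    rw [abs_mul, abs_of_pos (hPpos x hx z hz)]
  have hratio : (∫ z in frontier D, P x z * ζ z ∂σ) / Pσx - ζ w
      = (∫ z in frontier D, P x z * (ζ z - ζ w) ∂σ) / Pσx := by
    rw [keq, eq_div_iff hPσx.ne']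
    field_simp
  rw [hratio, abs_div, abs_of_pos hPσx, div_le_iff₀ hPσx]
  refine (kabs.trans hint).trans ?_
  have : c * M ≤ C₁ * (2 / η) ^ d * Pσx * dist x w * M := by
    rw [hc]
    gcongr
  nlinarith [mul_le_mul_of_nonneg_right hδw (mul_nonneg (mul_nonneg (mul_nonneg hC₁.le (by positivity : (0:ℝ) ≤ (2/η)^d)) hPσx.le) hM0)]

/-- Boundary convergence of ratios of Poisson-type potentials: if the kernel `P` satisfies
`P(x,z) ≤ C₁ (δ_D(x)/|x−z|^d) Pσ(x)` and `δ_D(x) ∫_{∂D} |x−z|^{-d} dσ(z) ≤ C₂`, then for a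
`σ`-integrable boundary function `ζ`, at every continuity point `z₀` of `ζ` (relative to
`∂D`) one has `Pζ(x)/Pσ(x) → ζ(z₀)` as `D ∋ x → z₀`; if `ζ` is continuous on `∂D`, the
convergence is uniform over boundary points. -/
theorem stmt_6 (d : ℕ) (hd : 1 ≤ d)
    (D : Set (EuclideanSpace ℝ (Fin d))) (hD : IsOpen D) (hDne : D.Nonempty)
    (hDb : Bornology.IsBounded D)
    (σ : Measure (EuclideanSpace ℝ (Fin d))) [IsFiniteMeasure σ]
    (P : EuclideanSpace ℝ (Fin d) → EuclideanSpace ℝ (Fin d) → ℝ)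
    (hPmeas : Measurable (Function.uncurry P))
    (hPpos : ∀ x ∈ D, ∀ z ∈ frontier D, 0 < P x z)
    (hPint : ∀ x ∈ D, IntegrableOn (P x) (frontier D) σ)
    (hPσpos : ∀ x ∈ D, 0 < ∫ z in frontier D, P x z ∂σ)
    (C₁ C₂ : ℝ) (hC₁ : 0 < C₁) (hC₂ : 0 < C₂)
    (hker : ∀ x ∈ D, ∀ z ∈ frontier D,
      P x z ≤ C₁ * (infDist x Dᶜ / dist x z ^ d) * ∫ w in frontier D, P x w ∂σ)
    (hσbound : ∀ x ∈ D,
      ENNReal.ofReal (infDist x Dᶜ) *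
          ∫⁻ z in frontier D, ENNReal.ofReal (1 / dist x z ^ d) ∂σ ≤ ENNReal.ofReal C₂)
    (ζ : EuclideanSpace ℝ (Fin d) → ℝ) (hζint : IntegrableOn ζ (frontier D) σ)
    (z₀ : EuclideanSpace ℝ (Fin d)) (hz₀ : z₀ ∈ frontier D)
    (hζcont : ContinuousWithinAt ζ (frontier D) z₀) :
    Tendsto (fun x => (∫ z in frontier D, P x z * ζ z ∂σ) / ∫ z in frontier D, P x z ∂σ)
      (nhdsWithin z₀ D) (nhds (ζ z₀)) ∧
    (ContinuousOn ζ (frontier D) → ∀ ε : ℝ, 0 < ε → ∃ r : ℝ, 0 < r ∧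
      ∀ w ∈ frontier D, ∀ x ∈ D, dist x w < r →
        |(∫ z in frontier D, P x z * ζ z ∂σ) / (∫ z in frontier D, P x z ∂σ) - ζ w| ≤ ε) := by
  constructor
  · rw [Metric.tendsto_nhdsWithin_nhds]
    intro ε hε
    obtain ⟨η, hη, hmod⟩ := Metric.continuousWithinAt_iff.1 hζcont (ε / 4) (by linarith)
    set M := ∫ z in frontier D, |ζ z - ζ z₀| ∂σ with hM
    have hM0 : 0 ≤ M := integral_nonneg fun z => abs_nonneg _
    set c := C₁ * (2 / η) ^ d * (M + 1) with hc
    have hcpos : 0 < c := by positivity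
    refine ⟨min (η / 2) (ε / (4 * c)), by positivity, ?_⟩
    intro x hx hxz
    have h1 : dist x z₀ < η / 2 := hxz.trans_le (min_le_left _ _)
    have h2 : dist x z₀ < ε / (4 * c) := hxz.trans_le (min_le_right _ _)
    have key := core_est hD hPmeas hPpos hPint hPσpos hC₁ hker hζint hz₀ hη
      (by linarith : (0:ℝ) ≤ ε / 4)
      (fun z hz hzd => by rw [← Real.dist_eq]; exact (hmod hz hzd).le) hx h1
    rw [Real.dist_eq]
    have h3 : C₁ * (2 / η) ^ d * M * dist x z₀ ≤ ε / 4 := by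
      have ha : (0:ℝ) ≤ C₁ * (2 / η) ^ d := by positivity
      have e1 : C₁ * (2 / η) ^ d * M * dist x z₀ ≤ c * dist x z₀ := by
        refine mul_le_mul_of_nonneg_right ?_ dist_nonneg
        rw [hc]; nlinarith
      have e2 : c * dist x z₀ ≤ c * (ε / (4 * c)) :=
        mul_le_mul_of_nonneg_left h2.le hcpos.le
      have e3 : c * (ε / (4 * c)) = ε / 4 := by
        have := hcpos.ne'
        field_simp
      linarith
    linarith
  · intro hζc ε hε
    have hAcomp : IsCompact (frontier D) :=
      Metric.isCompact_of_isClosed_isBounded isClosed_frontier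
        (hDb.closure.subset frontier_subset_closure)
    obtain ⟨B, hB⟩ := hAcomp.exists_bound_of_continuousOn hζc
    set Mu := 2 * |B| * (σ (frontier D)).toReal + 1 with hMudef
    have hMu : 0 < Mu := by positivity
    obtain ⟨η, hη, hmod⟩ := Metric.uniformContinuousOn_iff.1
      (hAcomp.uniformContinuousOn_of_continuous hζc) (ε / 4) (by linarith)
    set c := C₁ * (2 / η) ^ d * Mu with hc
    have hcpos : 0 < c := by positivity
    refine ⟨min (η / 2) (ε / (4 * c)), by positivity, ?_⟩
    intro w hw x hx hxw
    have h1 : dist x w < η / 2 := hxw.trans_le (min_le_left _ _)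
    have h2 : dist x w < ε / (4 * c) := hxw.trans_le (min_le_right _ _)
    have key := core_est hD hPmeas hPpos hPint hPσpos hC₁ hker hζint hw hη
      (by linarith : (0:ℝ) ≤ ε / 4)
      (fun z hz hzd => by
        rw [← Real.dist_eq]; exact (hmod z hz w hw hzd).le) hx h1
    set Mw := ∫ z in frontier D, |ζ z - ζ w| ∂σ with hMw
    have hMw0 : 0 ≤ Mw := integral_nonneg fun z => abs_nonneg _
    have hMwle : Mw ≤ Mu := by
      have hAmeas : MeasurableSet (frontier D) := isClosed_frontier.measurableSet
      have hint1 : IntegrableOn (fun z => |ζ z - ζ w|) (frontier D) σ :=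
        (hζint.sub (integrableOn_const (measure_lt_top σ _).ne)).abs
      have step : Mw ≤ ∫ _z in frontier D, 2 * |B| ∂σ := by
        refine setIntegral_mono_on hint1
          (integrableOn_const (measure_lt_top σ _).ne) hAmeas ?_
        intro z hz
        have b1 : |ζ z| ≤ |B| := le_trans (by simpa [Real.norm_eq_abs] using hB z hz) (le_abs_self B)
        have b2 : |ζ w| ≤ |B| := le_trans (by simpa [Real.norm_eq_abs] using hB w hw) (le_abs_self B)
        calc |ζ z - ζ w| ≤ |ζ z| + |ζ w| := abs_sub _ _
          _ ≤ 2 * |B| := by linarith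
      refine step.trans ?_
      rw [setIntegral_const, smul_eq_mul, hMudef, measureReal_def]
      nlinarith [ENNReal.toReal_nonneg (a := σ (frontier D)), abs_nonneg B]
    have h3 : C₁ * (2 / η) ^ d * Mw * dist x w ≤ ε / 4 := by
      have ha : (0:ℝ) ≤ C₁ * (2 / η) ^ d := by positivity
      have e1 : C₁ * (2 / η) ^ d * Mw * dist x w ≤ c * dist x w := by
        refine mul_le_mul_of_nonneg_right ?_ dist_nonneg
        rw [hc]
        exact mul_le_mul_of_nonneg_left hMwle ha
      have e2 : c * dist x w ≤ c * (ε / (4 * c)) :=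
        mul_le_mul_of_nonneg_left h2.le hcpos.le
      have e3 : c * (ε / (4 * c)) = ε / 4 := by
        have := hcpos.ne'
        field_simp
      linarith
    linarith
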